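/- For any λ1, λ2 > 0 and ε, δ ≥ 0 there exists α = α(λ1,λ2,ε,δ) ≥ 0 such that every (λ1,λ2,ε)-quasigeodesic and δ-hyperbolic metric space is α-rough geodesic. -/

import Mathlib

open Filter Set MeasureTheory Topology

noncomputable section

variable {X : Type*}

/-- The Gromov product `(x|y)_w` with respect to `d`. -/
def gp (d : X → X → ℝ) (w x y : X) : ℝ := (d x w + d y w - d x y) / 2

/-- `d` is a pseudometric. -/
def IsPseudometric (d : X → X → ℝ) : Prop :=
  (∀ x, d x x = 0) ∧ (∀ x y, d x y = d y x) ∧ (∀ x y z, d x z ≤ d x y + d y z)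

/-- `d` is `δ`-hyperbolic: the four-point Gromov product condition. -/
def GromovHyperbolic (d : X → X → ℝ) (δ : ℝ) : Prop :=
  ∀ x y z w, min (gp d w x y) (gp d w y z) - δ ≤ gp d w x z

/-- `d` is `α`-rough geodesic: any two points are joined by an `α`-rough geodesic. -/
def RoughGeodesic (d : X → X → ℝ) (α : ℝ) : Prop :=
  ∀ x y : X, ∃ (n : ℕ) (γ : ℕ → X), γ 0 = x ∧ γ n = y ∧
    ∀ i j : ℕ, i ≤ n → j ≤ n →
      |(i : ℝ) - (j : ℝ)| - α ≤ d (γ i) (γ j) ∧ d (γ i) (γ j) ≤ |(i : ℝ) - (j : ℝ)| + α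

/-- A `(λ1,λ2,ε)`-quasigeodesic space: any two points are joined by a discrete
`(λ1,λ2,ε)`-quasigeodesic. -/
def QuasigeodesicSpace (d : X → X → ℝ) (l1 l2 e : ℝ) : Prop :=
  ∀ x y : X, ∃ (n : ℕ) (γ : ℕ → X), γ 0 = x ∧ γ n = y ∧
    ∀ i j : ℕ, i ≤ n → j ≤ n →
      |(i : ℝ) - (j : ℝ)| / l1 - e ≤ d (γ i) (γ j) ∧
        d (γ i) (γ j) ≤ l2 * |(i : ℝ) - (j : ℝ)| + e

section RoughAux

variable {d : X → X → ℝ}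

lemma pm_nonneg (hd : IsPseudometric d) (x y : X) : 0 ≤ d x y := by
  obtain ⟨h0, hs, ht⟩ := hd
  have h := ht x y x
  have h2 := hs y x
  have h3 := h0 x
  linarith

lemma gp_nonneg (hd : IsPseudometric d) (w x y : X) : 0 ≤ gp d w x y := by
  obtain ⟨h0, hs, ht⟩ := hd
  have h := ht x w y
  have h2 := hs y w
  unfold gp
  linarith

lemma gp_le_left (hd : IsPseudometric d) (w x y : X) : gp d w x y ≤ d x w := by
  obtain ⟨h0, hs, ht⟩ := hd
  have h := ht y x w
  have h2 := hs x y
  unfold gp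
  linarith

lemma gp_symm (hd : IsPseudometric d) (w x y : X) : gp d w x y = gp d w y x := by
  obtain ⟨h0, hs, ht⟩ := hd
  unfold gp
  rw [hs x y]
  ring

lemma gp_self (hd : IsPseudometric d) (w x : X) : gp d w x x = d x w := by
  obtain ⟨h0, hs, ht⟩ := hd
  unfold gp
  rw [h0]
  ring

/-- `gp` is 1-Lipschitz in the second argument. -/
lemma gp_lipschitz₂ (hd : IsPseudometric d) (w x x' y : X) :
    gp d w x y ≤ gp d w x' y + d x x' := by
  obtain ⟨h0, hs, ht⟩ := hd
  have h1 := ht x x' w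
  have h2 := ht x' x y
  have h3 := hs x' x
  unfold gp
  linarith

/-- `gp` is 1-Lipschitz in the basepoint. -/
lemma gp_lipschitz_base (hd : IsPseudometric d) (w w' x y : X) :
    gp d w x y ≤ gp d w' x y + d w w' := by
  obtain ⟨h0, hs, ht⟩ := hd
  have h1 := ht x w' w
  have h2 := ht y w' w
  have h3 := hs w' w
  unfold gp
  linarith

/-- The chain lemma: iterated four-point condition with logarithmic loss. -/
lemma chain_lemma {δ : ℝ} (hδ : 0 ≤ δ) (hhyp : GromovHyperbolic d δ) (w : X) (u : ℕ → X) :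
    ∀ (K s p : ℕ), 1 ≤ p → p ≤ 2^K → ∀ m : ℝ,
      (∀ l, s ≤ l → l < s + p → m ≤ gp d w (u l) (u (l+1))) →
      m - δ*K ≤ gp d w (u s) (u (s+p)) := by
  intro K
  induction K with
  | zero =>
    intro s p hp1 hp2 m hm
    have hp : p = 1 := by omega
    subst hp
    have := hm s le_rfl (by omega)
    simpa using this
  | succ K ih =>
    intro s p hp1 hp2 m hm
    by_cases hple : p ≤ 2^K
    · have h := ih s p hp1 hple m hm
      have : δ * (K:ℝ) ≤ δ * ((K:ℕ)+1 : ℕ) := by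
        push_cast
        nlinarith
      push_cast at this ⊢
      linarith
    · push_neg at hple
      set q := p - 2^K with hq
      have hq1 : 1  ≤ q := by
        have : 1 ≤ 2^K := Nat.one_le_two_pow
        omega
      have hq2 : q ≤ 2^K := by
        have : p ≤ 2^(K+1) := hp2
        have h2 : 2^(K+1) = 2^K + 2^K := by ring
        omega
      have h1 := ih s q hq1 hq2 m (fun l hl1 hl2 => hm l hl1 (by omega))
      have h2 := ih (s+q) (2^K) Nat.one_le_two_pow le_rfl m
        (fun l hl1 hl2 => hm l (by omega) (by omega))
      have heq : s + q + 2^K = s + p := by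
        have : 2^K ≤ p := le_of_lt hple
        omega
      rw [heq] at h2
      have key := hhyp (u s) (u (s+q)) (u (s+p)) w
      have hmin : min (gp d w (u s) (u (s+q))) (gp d w (u (s+q)) (u (s+p))) ≥ m - δ*K := by
        rcases le_total (gp d w (u s) (u (s+q))) (gp d w (u (s+q)) (u (s+p))) with h | h
        · rw [min_eq_left h]; linarith
        · rw [min_eq_right h]; linarith
      push_cast
      push_cast at hmin
      linarith

end RoughAux

/-- Reduce an index chain to an injective one whose consecutive pairs all occur in the
original chain. -/
lemma exists_injOn_reduction (J : Finset ℕ) :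
    ∀ (p : ℕ) (c : ℕ → ℕ), (∀ l ≤ p, c l ∈ J) →
    ∃ (p' : ℕ) (c' : ℕ → ℕ), p' ≤ p ∧ c' 0 = c 0 ∧ c' p' = c p ∧ (∀ l ≤ p', c' l ∈ J) ∧
      Set.InjOn c' (Set.Iic p') ∧ (∀ l < p', ∃ s < p, c' l = c s ∧ c' (l+1) = c (s+1)) := by
  intro p
  induction p using Nat.strong_induction_on with
  | _ p ih =>
    intro c hc
    by_cases hinj : Set.InjOn c (Set.Iic p)
    · exact ⟨p, c, le_rfl, rfl, rfl, hc, hinj, fun l hl => ⟨l, hl, rfl, rfl⟩⟩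
    · rw [Set.InjOn] at hinj
      push_neg at hinj
      obtain ⟨l1, hl1, l2, hl2, hceq, hne⟩ := hinj
      simp only [Set.mem_Iic] at hl1 hl2
      -- wlog l1 < l2
      obtain ⟨a, b, hab, ha, hb, hcab⟩ : ∃ a b, a < b ∧ a ≤ p ∧ b ≤ p ∧ c a = c b := by
        rcases Nat.lt_or_ge l1 l2 with h | h
        · exact ⟨l1, l2, h, hl1, hl2, hceq⟩
        · exact ⟨l2, l1, by omega, hl2, hl1, hceq.symm⟩
      set p₂ := p - (b - a) with hp₂
      set c₂ : ℕ → ℕ := fun l => if l < a then c l else c (l + (b - a)) with hc₂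
      have hp₂lt : p₂ < p := by omega
      have hc₂0 : c₂ 0 = c 0 := by
        by_cases h0 : 0 < a
        · simp only [hc₂, if_pos h0]
        · have ha0 : a = 0 := by omega
          have : ¬ (0 < a) := by omega
          simp only [hc₂, if_neg this]
          subst ha0
          simpa using hcab.symm
      have hc₂p : c₂ p₂ = c p := by
        have : ¬ (p₂ < a) := by omega
        simp only [hc₂, this, if_false]
        congr 1
        omega
      have hc₂mem : ∀ l ≤ p₂, c₂ l ∈ J := by
        intro l hl
        simp only [hc₂]
        split
        · exact hc l (by omega)
        · exact hc _ (by omega)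
      have hc₂pairs : ∀ l < p₂, ∃ s < p, c₂ l = c s ∧ c₂ (l+1) = c (s+1) := by
        intro l hl
        by_cases h1 : l + 1 < a
        · have hla : l < a := by omega
          exact ⟨l, by omega, by simp only [hc₂, if_pos hla], by simp only [hc₂, if_pos h1]⟩
        · by_cases h2 : l < a
          · -- l + 1 = a
            have hla : l + 1 = a := by omega
            refine ⟨l, by omega, by simp only [hc₂, if_pos h2], ?_⟩
            have : ¬ (l + 1 < a) := by omega
            simp only [hc₂, this, if_false]
            have : l + 1 + (b - a) = b := by omega
            rw [this, ← hcab, hla]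
          · refine ⟨l + (b - a), by omega, ?_, ?_⟩
            · simp only [hc₂, h2, if_false]
            · have h3 : ¬ (l + 1 < a) := by omega
              simp only [hc₂, h3, if_false]
              congr 1
              omega
      obtain ⟨p', c', h1, h2, h3, h4, h5, h6⟩ := ih p₂ hp₂lt c₂ hc₂mem
      refine ⟨p', c', by omega, h2.trans hc₂0, h3.trans hc₂p, h4, h5, ?_⟩
      intro l hl
      obtain ⟨s, hs, hA, hB⟩ := h6 l hl
      obtain ⟨s', hs', hA', hB'⟩ := hc₂pairs s hs
      exact ⟨s', hs', hA.trans hA', hB.trans hB'⟩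

lemma injOn_card_bound {J : Finset ℕ} {p' : ℕ} {c' : ℕ → ℕ}
    (hmem : ∀ l ≤ p', c' l ∈ J) (hinj : Set.InjOn c' (Set.Iic p')) : p' + 1 ≤ J.card := by
  have hsub : ↑(Finset.range (p' + 1)) ⊆ Set.Iic p' := by
    intro a ha
    simp only [Finset.coe_range, Set.mem_Iio] at ha
    exact Set.mem_Iic.mpr (by omega)
  have h := Finset.card_le_card_of_injOn (s := Finset.range (p' + 1)) (t := J) c'
    (fun a ha => by
      simp only [Finset.mem_coe, Finset.mem_range] at ha
      exact hmem a (by omega))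
    (hinj.mono hsub)
  simpa using h

section PP

variable (d : X → X → ℝ) (γ : ℕ → X) (J : Finset ℕ)

/-- The set of chain values from `u` to `v` through `J`. -/
def ppSet (u v : ℕ) : Set ℝ :=
  {r | ∃ (p : ℕ) (c : ℕ → ℕ) (hp : 0 < p), c 0 = u ∧ c p = v ∧ (∀ l ≤ p, c l ∈ J) ∧
    r = (Finset.range p).inf' (Finset.nonempty_range_iff.mpr hp.ne')
      (fun l => gp d (γ 0) (γ (c l)) (γ (c (l+1))))}

/-- The maximized Gromov product over chains through `J`, basepoint `γ 0`. -/
def pp (u v : ℕ) : ℝ := sSup (ppSet d γ J u v)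

variable {d γ J}
variable (hd : IsPseudometric d)

lemma ppSet_mem_gp {u v : ℕ} (hu : u ∈ J) (hv : v ∈ J) :
    gp d (γ 0) (γ u) (γ v) ∈ ppSet d γ J u v := by
  refine ⟨1, fun l => if l = 0 then u else v, one_pos, by simp, by simp, ?_, ?_⟩
  · intro l hl
    interval_cases l <;> simp [hu, hv]
  · simp

lemma ppSet_nonempty {u v : ℕ} (hu : u ∈ J) (hv : v ∈ J) : (ppSet d γ J u v).Nonempty :=
  ⟨_, ppSet_mem_gp hu hv⟩

include hd in
lemma ppSet_bddAbove (u v : ℕ) : BddAbove (ppSet d γ J u v) := by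
  refine ⟨d (γ u) (γ 0), ?_⟩
  rintro r ⟨p, c, hp, hc0, hcp, hcm, rfl⟩
  have h0 : (0 : ℕ) ∈ Finset.range p := by simp [hp]
  refine le_trans (Finset.inf'_le _ h0) ?_
  rw [hc0]
  exact gp_le_left hd _ _ _

include hd in
lemma le_pp {u v : ℕ} (hu : u ∈ J) (hv : v ∈ J) :
    gp d (γ 0) (γ u) (γ v) ≤ pp d γ J u v :=
  le_csSup (ppSet_bddAbove hd u v) (ppSet_mem_gp hu hv)

include hd in
lemma pp_le {δ : ℝ} (hδ : 0 ≤ δ) (hhyp : GromovHyperbolic d δ) {K : ℕ}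
    (hcard : J.card ≤ 2^K + 1) {u v : ℕ} (hu : u ∈ J) (hv : v ∈ J) :
    pp d γ J u v ≤ gp d (γ 0) (γ u) (γ v) + δ * K := by
  apply csSup_le (ppSet_nonempty hu hv)
  rintro r ⟨p, c, hp, hc0, hcp, hcm, rfl⟩
  obtain ⟨p', c', hp'le, h0, hpp, hmem, hinj, hpairs⟩ := exists_injOn_reduction J p c hcm
  set r := (Finset.range p).inf' (Finset.nonempty_range_iff.mpr hp.ne')
      (fun l => gp d (γ 0) (γ (c l)) (γ (c (l+1)))) with hr
  rcases Nat.eq_zero_or_pos p' with hp0 | hp0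
  · -- u = v, bound directly by the first pair
    have huv : u = v := by
      rw [← hc0, ← hcp, ← h0, ← hpp, hp0]
    have h0mem : (0 : ℕ) ∈ Finset.range p := by simp [hp]
    have hr1 : r ≤ gp d (γ 0) (γ (c 0)) (γ (c 1)) := Finset.inf'_le _ h0mem
    have hr2 : gp d (γ 0) (γ (c 0)) (γ (c 1)) ≤ d (γ (c 0)) (γ 0) := gp_le_left hd _ _ _
    have hr3 : d (γ u) (γ 0) = gp d (γ 0) (γ u) (γ v) := by
      rw [huv]; exact (gp_self hd _ _).symm
    rw [hc0] at hr2 hr1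
    nlinarith [mul_nonneg hδ (Nat.cast_nonneg K)]
  · -- use the chain lemma on the reduced chain
    have hp'2K : p' ≤ 2^K := by
      have := injOn_card_bound hmem hinj
      omega
    have hchain := chain_lemma hδ hhyp (γ 0) (fun l => γ (c' (min l p'))) K 0 p' hp0 hp'2K r ?_
    · simp only [Nat.zero_add, Nat.zero_min, min_self] at hchain
      rw [h0, hc0, hpp, hcp] at hchain
      linarith
    · intro l hl1 hl2
      simp only [Nat.zero_add] at hl2
      have e1 : min l p' = l := by omega
      have e2 : min (l+1) p' = l + 1 := by omega
      simp only [e1, e2]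
      obtain ⟨s, hs, hA, hB⟩ := hpairs l hl2
      rw [hA, hB]
      exact Finset.inf'_le _ (by simp [hs])

include hd in
lemma pp_hyp {u v w : ℕ} (hu : u ∈ J) (hv : v ∈ J) (hw : w ∈ J) :
    min (pp d γ J u v) (pp d γ J v w) ≤ pp d γ J u w := by
  rcases le_or_gt (min (pp d γ J u v) (pp d γ J v w)) (pp d γ J u w) with h | h
  · exact h
  exfalso
  set μ := pp d γ J u w with hμ
  have h1 : μ < pp d γ J u v := lt_of_le_of_lt (le_refl _) (lt_of_lt_of_le h (min_le_left _ _))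
  have h2 : μ < pp d γ J v w := lt_of_lt_of_le h (min_le_right _ _)
  obtain ⟨r1, hr1mem, hr1⟩ := exists_lt_of_lt_csSup (ppSet_nonempty hu hv) h1
  obtain ⟨r2, hr2mem, hr2⟩ := exists_lt_of_lt_csSup (ppSet_nonempty hv hw) h2
  obtain ⟨p1, c1, hp1, hc10, hc1p, hc1m, hre1⟩ := hr1mem
  obtain ⟨p2, c2, hp2, hc20, hc2p, hc2m, hre2⟩ := hr2mem
  -- splice
  set c : ℕ → ℕ := fun l => if l ≤ p1 then c1 l else c2 (l - p1) with hc
  have hcmem : ∀ l ≤ p1 + p2, c l ∈ J := by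
    intro l hl
    simp only [hc]
    split
    · exact hc1m l (by omega)
    · exact hc2m _ (by omega)
  have hval : ∀ l < p1 + p2, min r1 r2 ≤ gp d (γ 0) (γ (c l)) (γ (c (l+1))) := by
    intro l hl
    rcases Nat.lt_or_ge l p1 with h | h
    · have e1 : c l = c1 l := by simp only [hc, if_pos (by omega : l ≤ p1)]
      have e2 : c (l+1) = c1 (l+1) := by simp only [hc, if_pos (by omega : l + 1 ≤ p1)]
      rw [e1, e2]
      refine le_trans (min_le_left _ _) ?_
      rw [hre1]
      exact Finset.inf'_le _ (by simp [h])
    · have e1 : c l = c2 (l - p1) := by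
        rcases Nat.eq_or_lt_of_le h with h' | h'
        · simp only [hc, if_pos (le_of_eq h'.symm)]
          rw [← h']
          simp [hc1p, ← hc20]
        · simp only [hc, if_neg (by omega : ¬ l ≤ p1)]
      have e2 : c (l+1) = c2 (l + 1 - p1) := by
        simp only [hc, if_neg (by omega : ¬ l + 1 ≤ p1)]
      rw [e1, e2]
      refine le_trans (min_le_right _ _) ?_
      rw [hre2]
      have e3 : l + 1 - p1 = (l - p1) + 1 := by omega
      rw [e3]
      exact Finset.inf'_le _ (by simp; omega)
  have hmem : ((Finset.range (p1 + p2)).inf' (Finset.nonempty_range_iff.mpr (by omega))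
      (fun l => gp d (γ 0) (γ (c l)) (γ (c (l+1))))) ∈ ppSet d γ J u w := by
    refine ⟨p1 + p2, c, by omega, ?_, ?_, hcmem, rfl⟩
    · simp only [hc, if_pos (Nat.zero_le p1)]
      exact hc10
    · simp only [hc]
      rcases Nat.eq_zero_or_pos p2 with h2z | h2z
      · omega
      · rw [if_neg (by omega : ¬ p1 + p2 ≤ p1)]
        rw [(by omega : p1 + p2 - p1 = p2)]
        exact hc2p
  have hge : min r1 r2 ≤ (Finset.range (p1 + p2)).inf' (Finset.nonempty_range_iff.mpr (by omega))
      (fun l => gp d (γ 0) (γ (c l)) (γ (c (l+1)))) := by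
    apply Finset.le_inf'
    intro l hl
    simp only [Finset.mem_range] at hl
    exact hval l hl
  have : min r1 r2 ≤ μ := le_trans hge (le_csSup (ppSet_bddAbove hd u w) hmem)
  rcases le_total r1 r2 with h' | h'
  · rw [min_eq_left h'] at this; linarith
  · rw [min_eq_right h'] at this; linarith

include hd in
lemma pp_symm (u v : ℕ) : pp d γ J u v = pp d γ J v u := by
  have key : ∀ a b : ℕ, ppSet d γ J a b ⊆ ppSet d γ J b a := by
    intro a b r hr
    obtain ⟨p, c, hp, hc0, hcp, hcm, rfl⟩ := hr
    refine ⟨p, fun l => c (p - l), hp, by simp [hcp], by simp [hc0], fun l hl => hcm _ (by omega), ?_⟩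
    apply le_antisymm
    · apply Finset.le_inf'
      intro l hl
      simp only [Finset.mem_range] at hl
      have hmem : p - 1 - l ∈ Finset.range p := by simp; omega
      refine le_trans (Finset.inf'_le _ hmem) ?_
      have i1 : p - (l+1) = p - 1 - l := by omega
      have i2 : p - l = (p - 1 - l) + 1 := by omega
      simp only [i1, i2]
      exact le_of_eq (gp_symm hd _ _ _)
    · apply Finset.le_inf'
      intro l hl
      simp only [Finset.mem_range] at hl
      have e : p - 1 - l ∈ Finset.range p := by simp; omega
      refine le_trans (Finset.inf'_le _ e) ?_
      have i1 : p - (p - 1 - l) = l + 1 := by omega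
      have i2 : p - (p - 1 - l + 1) = l := by omega
      simp only [i1, i2]
      exact le_of_eq (gp_symm hd _ _ _)
  unfold pp
  rw [Set.Subset.antisymm (key u v) (key v u)]

end PP

lemma cast_abs_sub_of_le {i j : ℕ} (h : i ≤ j) : |(i:ℝ) - j| = (j:ℝ) - i := by
  have h' : (i:ℝ) ≤ j := by exact_mod_cast h
  rw [abs_sub_comm, abs_of_nonneg (by linarith)]

set_option maxHeartbeats 2000000 in
/-- The Morse-type bound: every point of a quasigeodesic is uniformly close to
being "between" the endpoints, measured by the Gromov product. -/
lemma morse_bound {d : X → X → ℝ} {l1 l2 e δ : ℝ}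
    (hl1 : 0 < l1) (hl2 : 0 < l2) (he : 0 ≤ e) (hδ : 0 ≤ δ)
    (hd : IsPseudometric d) (hhyp : GromovHyperbolic d δ)
    {n : ℕ} {γ : ℕ → X}
    (hlow : ∀ i j : ℕ, i ≤ n → j ≤ n → |(i:ℝ) - j| / l1 - e ≤ d (γ i) (γ j))
    (hup : ∀ i j : ℕ, i ≤ n → j ≤ n → d (γ i) (γ j) ≤ l2 * |(i:ℝ) - j| + e)
    (K S : ℕ) (hS0 : 1 ≤ S) (hS2 : 2*S + 2 ≤ 2^K)
    (hS1 : l1 * (2*(δ*K + (l2+e)*l1*(3*(l2+e) + 2*(δ*K) + e)/2 + (l2+e)) + (l2+e) + 2*(δ*K) + e)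
      < S) :
    ∀ k, k ≤ n → gp d (γ k) (γ 0) (γ n) ≤ (l2+e)*S + δ*K + (l2+e)/2 + 1 := by
  classical
  set M : ℝ := l2 + e with hMdef
  set Δ : ℝ := δ * K with hΔdef
  set r : ℝ := Δ + M*l1*(3*M + 2*Δ + e)/2 + M with hrdef
  set c₀ : ℝ := M*S + Δ + M/2 + 1 with hc₀def
  have hM : 0 < M := by positivity
  have hΔ0 : 0 ≤ Δ := by positivity
  have hmid : 0 ≤ M*l1*(3*M + 2*Δ + e)/2 := by positivity
  clear_value M Δ r c₀
  have hrΔ : Δ < r := by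
    rw [hrdef]; linarith
  -- step distance bound
  have hstep : ∀ i j : ℕ, i ≤ n → j ≤ n → d (γ i) (γ j) ≤ M * |(i:ℝ) - j| := by
    intro i j hi hj
    by_cases hij : i = j
    · subst hij
      rw [hd.1]
      have h0 : (i:ℝ) - i = 0 := by ring
      rw [h0, abs_zero, mul_zero]
    · have h1 : (1:ℝ) ≤ |(i:ℝ) - j| := by
        rcases Nat.lt_or_ge i j with h | h
        · rw [cast_abs_sub_of_le h.le]
          have : (i:ℝ) + 1 ≤ j := by exact_mod_cast h
          linarith
        · have h' : j < i := by omega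
          rw [abs_sub_comm, cast_abs_sub_of_le h'.le]
          have : (j:ℝ) + 1 ≤ i := by exact_mod_cast h'
          linarith
      have h2 := hup i j hi hj
      have : e ≤ e * |(i:ℝ) - j| := by nlinarith
      rw [hMdef]
      nlinarith
  set P : ℕ → ℝ := fun k => gp d (γ k) (γ 0) (γ n) with hPdef
  clear_value P
  have hPEq : ∀ k, P k = gp d (γ k) (γ 0) (γ n) := fun k => by rw [hPdef]
  have hP0 : P 0 = 0 := by
    rw [hPEq]
    unfold gp
    rw [hd.1, hd.2.1 (γ n) (γ 0)]
    ring
  have hPn : P n = 0 := by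
    rw [hPEq]
    unfold gp
    rw [hd.1, hd.2.1 (γ 0) (γ n)]
    ring
  have hPlip : ∀ k k' : ℕ, k ≤ n → k' ≤ n → P k ≤ P k' + M * |(k:ℝ) - k'| := by
    intro k k' hk hk'
    have hgl := gp_lipschitz_base hd (γ k) (γ k') (γ 0) (γ n)
    have := hstep k k' hk hk'
    rw [hPEq, hPEq]
    linarith
  -- the maximum of P
  obtain ⟨kst, hkstmem, hmax⟩ := Finset.exists_max_image (Finset.range (n+1)) P
    ⟨0, by simp⟩
  simp only [Finset.mem_range] at hkstmem
  have hkstn : kst ≤ n := by omega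
  have hmax' : ∀ k, k ≤ n → P k ≤ P kst := fun k hk => hmax k (by simp; omega)
  suffices hψ : P kst ≤ c₀ by
    intro k hk
    calc gp d (γ k) (γ 0) (γ n) = P k := (hPEq k).symm
    _ ≤ P kst := hmax' k hk
    _ ≤ c₀ := hψ
  by_contra hcon
  push_neg at hcon
  set Ψ : ℝ := P kst with hΨdef
  clear_value Ψ
  -- boundary cases
  have hSk : S ≤ kst := by
    by_contra hco
    push_neg at hco
    have h1 := hPlip kst 0 hkstn (by omega)
    rw [hP0, Nat.cast_zero, sub_zero, abs_of_nonneg (by positivity)] at h1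
    have h2 : (kst:ℝ) ≤ S := by exact_mod_cast hco.le
    have h3 : M * (kst:ℝ) ≤ M * S := mul_le_mul_of_nonneg_left h2 hM.le
    linarith
  have hSn : kst + S ≤ n := by
    by_contra hco
    push_neg at hco
    have h1 := hPlip kst n hkstn le_rfl
    rw [hPn, cast_abs_sub_of_le hkstn] at h1
    have : (n:ℝ) - kst ≤ S := by
      have : n ≤ kst + S := by omega
      have := (Nat.cast_le (α := ℝ)).mpr this
      push_cast at this
      linarith
    have h3 : M * ((n:ℝ) - kst) ≤ M * S := mul_le_mul_of_nonneg_left this hM.le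
    linarith
  set a : ℕ := kst - S with hadef
  set b : ℕ := kst + S with hbdef
  have haS : a + S = kst := by omega
  have hab : a ≤ kst ∧ kst ≤ b ∧ b ≤ n ∧ a < kst ∧ kst < b := by omega
  set J : Finset ℕ := Finset.Icc a b ∪ {n} with hJdef
  have hJcard : J.card ≤ 2^K + 1 := by
    have h1 : J.card ≤ (Finset.Icc a b).card + 1 := by
      refine le_trans (Finset.card_union_le _ _) ?_
      simp
    rw [Nat.card_Icc] at h1
    have : b + 1 - a = 2*S + 1 := by omega
    omega
  have hwinJ : ∀ l, a ≤ l → l ≤ b → l ∈ J := by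
    intro l h1 h2
    exact Finset.mem_union_left _ (Finset.mem_Icc.mpr ⟨h1, h2⟩)
  have hnJ : n ∈ J := Finset.mem_union_right _ (by simp)
  have hwinn : ∀ l, l ≤ b → l ≤ n := fun l h => by omega
  -- deepness of the window
  clear_value J
  have hdeep : ∀ l, a ≤ l → l ≤ b → Ψ - M*S ≤ P l := by
    intro l h1 h2
    have h3 := hPlip kst l hkstn (hwinn l h2)
    have h4 : |(kst:ℝ) - l| ≤ S := by
      rcases le_total l kst with h | h
      · rw [abs_sub_comm, cast_abs_sub_of_le h]
        have : (kst:ℝ) ≤ a + S := by exact_mod_cast le_of_eq haS.symm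
        have : (a:ℝ) ≤ l := by exact_mod_cast h1
        have : (l:ℝ) ≤ kst := by exact_mod_cast h
        have haR : (a:ℝ) + S = kst := by exact_mod_cast haS
        linarith [(show (a:ℝ) ≤ l by exact_mod_cast h1)]
      · rw [cast_abs_sub_of_le h]
        have hbR : (kst:ℝ) + S = b := by
          rw [hbdef]; push_cast; ring
        have : (l:ℝ) ≤ b := by exact_mod_cast h2
        linarith
    nlinarith
  set te : ℕ → ℝ := fun l => pp d γ J l n with htedef
  set td : ℕ → ℝ := fun l => gp d (γ 0) (γ l) (γ n) with htddef
  clear_value te td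
  have hteEq : ∀ l, te l = pp d γ J l n := fun l => by rw [htedef]
  have htdEq : ∀ l, td l = gp d (γ 0) (γ l) (γ n) := fun l => by rw [htddef]
  have hte_ge : ∀ l, a ≤ l → l ≤ b → td l ≤ te l := by
    intro l h1 h2
    rw [hteEq, htdEq]
    exact le_pp hd (hwinJ l h1 h2) hnJ
  have hte_le : ∀ l, a ≤ l → l ≤ b → te l ≤ td l + Δ := by
    intro l h1 h2
    rw [hteEq, htdEq, hΔdef]
    exact pp_le hd hδ hhyp hJcard (hwinJ l h1 h2) hnJ
  have htP : ∀ l, td l + P l = d (γ l) (γ 0) := by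
    intro l
    have s1 := hd.2.1 (γ 0) (γ l)
    have s2 := hd.2.1 (γ n) (γ l)
    have s3 := hd.2.1 (γ n) (γ 0)
    rw [htdEq, hPEq]
    unfold gp
    linarith
  -- te is constant on the window
  have hstep_eq : ∀ l, a ≤ l → l < b → te l = te (l+1) := by
    intro l h1 h2
    by_contra hne
    have hJl : l ∈ J := hwinJ l h1 (by omega)
    have hJl1 : l + 1 ∈ J := hwinJ (l+1) (by omega) (by omega)
    have habs1 : |(l:ℝ) - (l+1:ℕ)| = 1 := by
      rw [cast_abs_sub_of_le (by omega)]
      push_cast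
      ring
    have hdl : d (γ l) (γ (l+1)) ≤ M := by
      have := hstep l (l+1) (hwinn l (by omega)) (hwinn (l+1) (by omega))
      rw [habs1] at this
      linarith
    have hgp_id : d (γ l) (γ (l+1)) =
        d (γ l) (γ 0) + d (γ (l+1)) (γ 0) - 2 * gp d (γ 0) (γ l) (γ (l+1)) := by
      unfold gp; ring
    have hd1 : te l - Δ + (Ψ - M*S) ≤ d (γ l) (γ 0) := by
      have e1 := hte_le l h1 (by omega)
      have e2 := hdeep l h1 (by omega)
      have e3 := htP l
      linarith
    have hd2 : te (l+1) - Δ + (Ψ - M*S) ≤ d (γ (l+1)) (γ 0) := by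
      have e1 := hte_le (l+1) (by omega) (by omega)
      have e2 := hdeep (l+1) (by omega) (by omega)
      have e3 := htP (l+1)
      linarith
    have hgp_le : gp d (γ 0) (γ l) (γ (l+1)) ≤ pp d γ J l (l+1) := le_pp hd hJl hJl1
    rcases lt_or_gt_of_ne hne with hlt | hgt
    · -- te l < te (l+1)
      have h3 := pp_hyp (γ := γ) hd hJl hJl1 hnJ
      rw [← hteEq, ← hteEq] at h3
      have hq : pp d γ J l (l+1) ≤ te l := by
        rcases le_total (pp d γ J l (l+1)) (te (l+1)) with h | h
        · rw [min_eq_left h] at h3; exact h3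
        · rw [min_eq_right h] at h3
          exfalso
          linarith
      linarith [hcon]
    · -- te l > te (l+1)
      have h3 := pp_hyp (γ := γ) hd hJl1 hJl hnJ
      rw [← hteEq, ← hteEq] at h3
      have hq : pp d γ J l (l+1) ≤ te (l+1) := by
        rcases le_total (pp d γ J (l+1) l) (te l) with h | h
        · rw [min_eq_left h] at h3
          rw [pp_symm hd]
          exact h3
        · rw [min_eq_right h] at h3
          exfalso
          linarith
      linarith [hcon]
  have hte_const : ∀ l, a ≤ l → l ≤ b → te l = te a := by
    have key : ∀ m : ℕ, a + m ≤ b → te (a + m) = te a := by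
      intro m
      induction m with
      | zero => intro _; rfl
      | succ m ih =>
        intro hm
        have e1 : a + (m+1) = (a+m) + 1 := by omega
        rw [e1, ← hstep_eq (a+m) (by omega) (by omega)]
        exact ih (by omega)
    intro l h1 h2
    have : l = a + (l - a) := by omega
    rw [this]
    exact key (l - a) (by omega)
  set τ : ℝ := te a with hτdef
  clear_value τ
  set ρ : ℕ → ℝ := fun l => d (γ l) (γ 0) - τ with hρdef
  clear_value ρ
  have hρEq : ∀ l, ρ l = d (γ l) (γ 0) - τ := fun l => by rw [hρdef]
  have hρ_le : ∀ l, a ≤ l → l ≤ b → ρ l ≤ P l := by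
    intro l h1 h2
    have e1 := hte_ge l h1 h2
    have e2 := htP l
    have e3 := hte_const l h1 h2
    rw [hρEq]
    linarith
  have hρ_ge : ∀ l, a ≤ l → l ≤ b → P l - Δ ≤ ρ l := by
    intro l h1 h2
    have e1 := hte_le l h1 h2
    have e2 := htP l
    have e3 := hte_const l h1 h2
    rw [hρEq]
    linarith
  have hρΨ : ∀ l, a ≤ l → l ≤ b → ρ l ≤ Ψ := by
    intro l h1 h2
    exact le_trans (hρ_le l h1 h2) (hmax' l (hwinn l h2))
  have hρlip : ∀ l l', l ≤ n → l' ≤ n → ρ l ≤ ρ l' + M * |(l:ℝ) - l'| := by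
    intro l l' h1 h2
    have htri := hd.2.2 (γ l) (γ l') (γ 0)
    have := hstep l l' h1 h2
    rw [hρEq, hρEq]
    linarith
  -- the key distance estimate along deep stretches
  have hkey : ∀ i j, a ≤ i → i < j → j ≤ b → ∀ B : ℝ,
      (∀ l, i ≤ l → l ≤ j → B ≤ ρ l) →
      d (γ i) (γ j) ≤ ρ i + ρ j - 2*B + M + 2*Δ := by
    intro i j hia hij hjb B hB
    have hp : 0 < j - i := by omega
    have hval_mem : ((Finset.range (j-i)).inf' (Finset.nonempty_range_iff.mpr hp.ne')
        (fun l => gp d (γ 0) (γ (i + l)) (γ (i + (l+1))))) ∈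
        ppSet d γ J i j := by
      refine ⟨j - i, fun l => i + l, hp, by simp, by show i + (j-i) = j; omega, ?_, rfl⟩
      intro l hl
      exact hwinJ (i + l) (by omega) (by omega)
    have hval_ge : τ + B - M/2 ≤
        ((Finset.range (j-i)).inf' (Finset.nonempty_range_iff.mpr hp.ne')
        (fun l => gp d (γ 0) (γ (i + l)) (γ (i + (l+1))))) := by
      apply Finset.le_inf'
      intro l hl
      simp only [Finset.mem_range] at hl
      have h1 : d (γ (i+l)) (γ (i+l+1)) ≤ M := by
        have := hstep (i+l) (i+l+1) (hwinn _ (by omega)) (hwinn _ (by omega))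
        rw [cast_abs_sub_of_le (by omega)] at this
        push_cast at this
        nlinarith
      have h2 : τ + ρ (i+l) = d (γ (i+l)) (γ 0) := by rw [hρEq]; ring
      have h3 : τ + ρ (i+l+1) = d (γ (i+l+1)) (γ 0) := by rw [hρEq]; ring
      have h4 := hB (i+l) (by omega) (by omega)
      have h5 := hB (i+l+1) (by omega) (by omega)
      show τ + B - M/2 ≤ gp d (γ 0) (γ (i + l)) (γ (i + (l+1)))
      have e : i + (l+1) = i + l + 1 := by omega
      rw [e]
      unfold gp
      linarith
    have hpp_ge : τ + B - M/2 ≤ pp d γ J i j :=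
      le_trans hval_ge (le_csSup (ppSet_bddAbove hd i j) hval_mem)
    have hpp_le : pp d γ J i j ≤ gp d (γ 0) (γ i) (γ j) + Δ := by
      rw [hΔdef]
      exact pp_le hd hδ hhyp hJcard (hwinJ i hia (by omega)) (hwinJ j (by omega) hjb)
    have hgp_ge : τ + B - M/2 - Δ ≤ gp d (γ 0) (γ i) (γ j) := by linarith
    have hid : d (γ i) (γ j) = d (γ i) (γ 0) + d (γ j) (γ 0) - 2 * gp d (γ 0) (γ i) (γ j) := by
      unfold gp; ring
    have h2 : τ + ρ i = d (γ i) (γ 0) := by rw [hρEq]; ring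
    have h3 : τ + ρ j = d (γ j) (γ 0) := by rw [hρEq]; ring
    linarith
  -- ρ at the peak
  have hρkst : Ψ - Δ ≤ ρ kst := by
    have h := hρ_ge kst hab.1 hab.2.1
    rw [hΨdef]
    linarith
  set FL : Finset ℕ := (Finset.Icc a kst).filter (fun l => ρ l ≤ Ψ - r) with hFLdef
  set FR : Finset ℕ := (Finset.Icc kst b).filter (fun l => ρ l ≤ Ψ - r) with hFRdef
  have hkstFL : kst ∉ FL := by
    simp only [hFLdef, Finset.mem_filter]
    rintro ⟨-, h⟩
    linarith
  have hkstFR : kst ∉ FR := by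
    simp only [hFRdef, Finset.mem_filter]
    rintro ⟨-, h⟩
    linarith
  -- contradiction in all cases
  rcases FL.eq_empty_or_nonempty with hFL | hFL
  · -- no dip on the left : the chain stays deep on [a, kst]
    have hall : ∀ l, a ≤ l → l ≤ kst → Ψ - r < ρ l := by
      intro l h1 h2
      by_contra hco
      push_neg at hco
      have : l ∈ FL := by
        simp only [hFLdef, Finset.mem_filter, Finset.mem_Icc]
        exact ⟨⟨h1, h2⟩, hco⟩
      rw [hFL] at this
      simp at this
    have hda := hkey a kst le_rfl hab.2.2.2.1 hab.2.1 (Ψ - r)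
      (fun l h1 h2 => (hall l h1 h2).le)
    have hlow' := hlow a kst (by omega) hkstn
    rw [cast_abs_sub_of_le hab.1] at hlow'
    have hcast : (kst:ℝ) - a = S := by
      have : (a:ℝ) + S = kst := by exact_mod_cast haS
      linarith
    rw [hcast] at hlow'
    have hρa := hρΨ a le_rfl (by omega)
    have hρk := hρΨ kst hab.1 hab.2.1
    -- d(γa,γkst) ≤ 2r + M + 2Δ, while S/l1 - e ≤ d
    have hfin : (S:ℝ)/l1 - e ≤ 2*r + M + 2*Δ := by linarith
    have hfin2 : (S:ℝ) ≤ l1 * (2*r + M + 2*Δ + e) := by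
      have h' : (S:ℝ)/l1 ≤ 2*r + M + 2*Δ + e := by linarith
      calc (S:ℝ) = (S:ℝ)/l1 * l1 := by field_simp
      _ ≤ (2*r + M + 2*Δ + e) * l1 := mul_le_mul_of_nonneg_right h' hl1.le
      _ = l1 * (2*r + M + 2*Δ + e) := by ring
    linarith [hS1]
  rcases FR.eq_empty_or_nonempty with hFR | hFR
  · have hall : ∀ l, kst ≤ l → l ≤ b → Ψ - r < ρ l := by
      intro l h1 h2
      by_contra hco
      push_neg at hco
      have : l ∈ FR := by
        simp only [hFRdef, Finset.mem_filter, Finset.mem_Icc]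
        exact ⟨⟨h1, h2⟩, hco⟩
      rw [hFR] at this
      simp at this
    have hda := hkey kst b hab.1 hab.2.2.2.2 le_rfl (Ψ - r)
      (fun l h1 h2 => (hall l h1 h2).le)
    have hlow' := hlow kst b hkstn (by omega)
    rw [cast_abs_sub_of_le hab.2.1] at hlow'
    have hcast : (b:ℝ) - kst = S := by
      have : (kst:ℝ) + S = b := by rw [hbdef]; push_cast; ring
      linarith
    rw [hcast] at hlow'
    have hρb := hρΨ b (by omega) le_rfl
    have hρk := hρΨ kst hab.1 hab.2.1
    have hfin : (S:ℝ)/l1 - e ≤ 2*r + M + 2*Δ := by linarith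
    have hfin2 : (S:ℝ) ≤ l1 * (2*r + M + 2*Δ + e) := by
      have h' : (S:ℝ)/l1 ≤ 2*r + M + 2*Δ + e := by linarith
      calc (S:ℝ) = (S:ℝ)/l1 * l1 := by field_simp
      _ ≤ (2*r + M + 2*Δ + e) * l1 := mul_le_mul_of_nonneg_right h' hl1.le
      _ = l1 * (2*r + M + 2*Δ + e) := by ring
    linarith [hS1]
  · -- Case A: dips on both sides
    set i : ℕ := FL.max' hFL with hidef
    set j : ℕ := FR.min' hFR with hjdef
    have hiFL : i ∈ FL := FL.max'_mem hFL
    have hjFR : j ∈ FR := FR.min'_mem hFR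
    simp only [hFLdef, Finset.mem_filter, Finset.mem_Icc] at hiFL
    simp only [hFRdef, Finset.mem_filter, Finset.mem_Icc] at hjFR
    have hik : i < kst := by
      rcases Nat.lt_or_ge i kst with h | h
      · exact h
      · exfalso
        have : i = kst := by omega
        rw [this] at hiFL
        linarith [hiFL.2]
    have hkj : kst < j := by
      rcases Nat.lt_or_ge kst j with h | h
      · exact h
      · exfalso
        have : j = kst := by omega
        rw [this] at hjFR
        linarith [hjFR.2]
    have hint : ∀ l, i < l → l < j → Ψ - r < ρ l := by
      intro l h1 h2
      by_contra hco
      push_neg at hco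
      rcases le_total l kst with h | h
      · have hmem : l ∈ FL := by
          simp only [hFLdef, Finset.mem_filter, Finset.mem_Icc]
          exact ⟨⟨by omega, h⟩, hco⟩
        have := FL.le_max' l hmem
        omega
      · have hmem : l ∈ FR := by
          simp only [hFRdef, Finset.mem_filter, Finset.mem_Icc]
          exact ⟨⟨h, by omega⟩, hco⟩
        have := FR.min'_le l hmem
        omega
    have hedgei : Ψ - r - M ≤ ρ i := by
      have h1 := hρlip (i+1) i (hwinn _ (by omega)) (hwinn _ (by omega))
      rw [abs_sub_comm, cast_abs_sub_of_le (by omega : i ≤ i + 1)] at h1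
      push_cast at h1
      have h3 := hint (i+1) (by omega) (by omega)
      linarith
    have hedgej : Ψ - r - M ≤ ρ j := by
      have h1 := hρlip (j-1) j (hwinn _ (by omega)) (hwinn _ (by omega))
      rw [cast_abs_sub_of_le (by omega : j - 1 ≤ j)] at h1
      have hc : ((j-1:ℕ):ℝ) = (j:ℝ) - 1 := by
        have h2 : (1:ℕ) ≤ j := by omega
        push_cast [Nat.cast_sub h2]
        ring
      rw [hc] at h1
      have h3 := hint (j-1) (by omega) (by omega)
      linarith
    have hB : ∀ l, i ≤ l → l ≤ j → Ψ - r - M ≤ ρ l := by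
      intro l h1 h2
      rcases Nat.eq_or_lt_of_le h1 with h | h
      · rw [← h]; exact hedgei
      rcases Nat.eq_or_lt_of_le h2 with h' | h'
      · rw [h']; exact hedgej
      · exact le_of_lt (by linarith [hint l h h'])
    have hda := hkey i j hiFL.1.1 (by omega) hjFR.1.2 (Ψ - r - M) hB
    have hdij : d (γ i) (γ j) ≤ 3*M + 2*Δ := by
      have := hiFL.2
      have := hjFR.2
      linarith
    have hlow' := hlow i j (hwinn _ (by omega)) (hwinn _ (by omega))
    rw [cast_abs_sub_of_le (by omega : i ≤ j)] at hlow'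
    have hji_le : (j:ℝ) - i ≤ l1 * (3*M + 2*Δ + e) := by
      have h' : ((j:ℝ) - i)/l1 ≤ 3*M + 2*Δ + e := by linarith
      calc ((j:ℝ) - i) = ((j:ℝ) - i)/l1 * l1 := by field_simp
      _ ≤ (3*M + 2*Δ + e) * l1 := mul_le_mul_of_nonneg_right h' hl1.le
      _ = l1 * (3*M + 2*Δ + e) := by ring
    -- lower bound on j - i
    have hcnt1 : r - Δ ≤ M * ((kst:ℝ) - i) := by
      have h1 := hρlip kst i hkstn (hwinn _ (by omega))
      rw [abs_sub_comm, cast_abs_sub_of_le (by omega : i ≤ kst)] at h1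
      have : ρ kst - ρ i ≤ M * ((kst:ℝ) - i) := by linarith
      have h2 := hiFL.2
      linarith [hρkst]
    have hcnt2 : r - Δ ≤ M * ((j:ℝ) - kst) := by
      have h1 := hρlip kst j hkstn (hwinn _ (by omega))
      rw [cast_abs_sub_of_le (by omega : kst ≤ j)] at h1
      have h2 := hjFR.2
      linarith [hρkst]
    have hMji : M * ((j:ℝ) - i) ≤ M * (l1 * (3*M + 2*Δ + e)) :=
      mul_le_mul_of_nonneg_left hji_le hM.le
    have hexp : M * ((j:ℝ) - i) = M * ((j:ℝ) - kst) + M * ((kst:ℝ) - i) := by ring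
    have hrexp : r - Δ = M + M*l1*(3*M + 2*Δ + e)/2 := by rw [hrdef]; ring
    have hassoc : M * (l1 * (3*M + 2*Δ + e)) = M*l1*(3*M + 2*Δ + e) := by ring
    linarith [hcnt1, hcnt2, hMji]

lemma exists_KS (l1 l2 e δ : ℝ) (hl1 : 0 < l1) (hl2 : 0 < l2) (he : 0 ≤ e) (hδ : 0 ≤ δ) :
    ∃ K S : ℕ, 1 ≤ S ∧ 2*S + 2 ≤ 2^K ∧
      l1 * (2*(δ*K + (l2+e)*l1*(3*(l2+e) + 2*(δ*K) + e)/2 + (l2+e)) + (l2+e) + 2*(δ*K) + e)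
        < S := by
  set M : ℝ := l2 + e with hM
  have hM0 : 0 < M := by positivity
  set A : ℝ := l1*(M*l1*(3*M+e) + 3*M + e) with hA
  set B : ℝ := l1*δ*(4 + 2*M*l1) with hB
  have hA0 : 0 ≤ A := by positivity
  have hB0 : 0 ≤ B := by positivity
  clear_value A B
  have hf : ∀ K : ℕ, l1 * (2*(δ*K + M*l1*(3*M + 2*(δ*K) + e)/2 + M) + M + 2*(δ*K) + e)
      = A + B*K := by
    intro K
    rw [hA, hB]
    ring
  obtain ⟨N, hNge⟩ := exists_nat_ge (2*A + 2*B + 6)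
  obtain ⟨K, hK⟩ : ∃ K : ℕ, K = 2*N + 4 := ⟨_, rfl⟩
  have hKr : (K:ℝ) = 2*(N:ℝ) + 4 := by rw [hK]; push_cast; ring
  obtain ⟨S, hSreal, hSreal2⟩ : ∃ S : ℕ, A + B*K + 1 ≤ (S:ℝ) ∧ (S:ℝ) ≤ A + B*K + 2 := by
    refine ⟨⌈A + B*(K:ℝ)⌉₊ + 1, ?_, ?_⟩
    · push_cast
      have := Nat.le_ceil (A + B*(K:ℝ))
      linarith
    · push_cast
      have := Nat.ceil_lt_add_one (by positivity : (0:ℝ) ≤ A + B*(K:ℝ))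
      linarith
  have hNpow : (N:ℝ) + 1 ≤ (2:ℝ)^N := by
    have h := Nat.lt_two_pow_self (n := N)
    have : (N:ℝ) + 1 ≤ ((2^N : ℕ):ℝ) := by exact_mod_cast h
    simpa using this
  have hS1 : 1 ≤ S := by
    have h : (1:ℝ) ≤ (S:ℝ) := by nlinarith [mul_nonneg hB0 (Nat.cast_nonneg K : (0:ℝ) ≤ K)]
    exact_mod_cast h
  refine ⟨K, S, hS1, ?_, ?_⟩
  · -- 2S + 2 ≤ 2^K
    have hpowK : ((2:ℝ))^K = 16 * ((2:ℝ)^N)^2 := by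
      rw [hK, show 2*N+4 = N*2+4 by ring, pow_add, pow_mul]
      norm_num
      ring
    have hN0 : (0:ℝ) ≤ N := Nat.cast_nonneg N
    have hxN : ((N:ℝ)+1)^2 ≤ ((2:ℝ)^N)^2 := by
      have h0 : (0:ℝ) ≤ (N:ℝ) + 1 := by positivity
      exact pow_le_pow_left₀ h0 hNpow 2
    have hgoal : (2*(S:ℝ) + 2) ≤ (2:ℝ)^K := by
      rw [hpowK]
      rw [hKr] at hSreal2
      nlinarith [hxN, hNge, hA0, hB0, hN0, mul_nonneg hB0 hN0,
        mul_nonneg (by linarith : (0:ℝ) ≤ (N:ℝ) - 2*B) hN0]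
    have : ((2*S + 2 : ℕ):ℝ) ≤ ((2^K : ℕ):ℝ) := by
      push_cast
      linarith
    exact_mod_cast this
  · rw [hf K]
    linarith

universe u

set_option maxHeartbeats 2000000 in
theorem quasigeodesic_hyperbolic_implies_rough_geodesic
    (l1 l2 e δ : ℝ) (hl1 : 0 < l1) (hl2 : 0 < l2) (he : 0 ≤ e) (hδ : 0 ≤ δ) :
    ∃ α : ℝ, 0 ≤ α ∧ ∀ (Y : Type u) (d : Y → Y → ℝ), IsPseudometric d →
      (∀ x y : Y, d x y = 0 → x = y) → GromovHyperbolic d δ →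
      QuasigeodesicSpace d l1 l2 e → RoughGeodesic d α := by
  classical
  obtain ⟨K, S, hS0, hS2, hS1⟩ := exists_KS l1 l2 e δ hl1 hl2 he hδ
  have hc₀0 : (0:ℝ) ≤ (l2+e)*S + δ*K + (l2+e)/2 + 1 := by positivity
  obtain ⟨c₀, hc₀⟩ : ∃ c : ℝ, c = (l2+e)*S + δ*K + (l2+e)/2 + 1 := ⟨_, rfl⟩
  rw [← hc₀] at hc₀0
  have hM : (0:ℝ) < l2 + e := by positivity
  refine ⟨2*(l2+e) + 2*c₀ + 2*δ + 2, by linarith, ?_⟩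
  intro Y d hd hpoint hhyp hquasi x y
  obtain ⟨n, γ, hγ0, hγn, hγ⟩ := hquasi x y
  subst hγ0
  subst hγn
  set α : ℝ := 2*(l2+e) + 2*c₀ + 2*δ + 2 with hα
  clear_value α
  have hα0 : (0:ℝ) ≤ α := by rw [hα]; linarith
  have hlow : ∀ i j : ℕ, i ≤ n → j ≤ n → |(i:ℝ) - j| / l1 - e ≤ d (γ i) (γ j) :=
    fun i j hi hj => (hγ i j hi hj).1
  have hup : ∀ i j : ℕ, i ≤ n → j ≤ n → d (γ i) (γ j) ≤ l2 * |(i:ℝ) - j| + e :=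
    fun i j hi hj => (hγ i j hi hj).2
  have hmorse : ∀ k, k ≤ n → gp d (γ k) (γ 0) (γ n) ≤ c₀ := by
    rw [hc₀]
    exact morse_bound hl1 hl2 he hδ hd hhyp hlow hup K S hS0 hS2 hS1
  -- step bound
  have hstep : ∀ i j : ℕ, i ≤ n → j ≤ n → d (γ i) (γ j) ≤ (l2+e) * |(i:ℝ) - j| := by
    intro i j hi hj
    by_cases hij : i = j
    · subst hij
      rw [hd.1]
      have h0 : (i:ℝ) - i = 0 := by ring
      rw [h0, abs_zero, mul_zero]
    · have h1 : (1:ℝ) ≤ |(i:ℝ) - j| := by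
        rcases Nat.lt_or_ge i j with h | h
        · rw [cast_abs_sub_of_le h.le]
          have : (i:ℝ) + 1 ≤ j := by exact_mod_cast h
          linarith
        · have h' : j < i := by omega
          rw [abs_sub_comm, cast_abs_sub_of_le h'.le]
          have : (j:ℝ) + 1 ≤ i := by exact_mod_cast h'
          linarith
      have h2 := hup i j hi hj
      have : e ≤ e * |(i:ℝ) - j| := by nlinarith
      nlinarith
  -- parameters along the quasigeodesic
  set t : ℕ → ℝ := fun i => gp d (γ 0) (γ i) (γ n) with ht
  clear_value t
  have htEq : ∀ i, t i = gp d (γ 0) (γ i) (γ n) := fun i => by rw [ht]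
  set D : ℝ := d (γ 0) (γ n) with hD
  clear_value D
  have hD0 : 0 ≤ D := by rw [hD]; exact pm_nonneg hd _ _
  have ht0 : t 0 = 0 := by
    rw [htEq]
    unfold gp
    rw [hd.1, hd.2.1 (γ n) (γ 0)]
    ring
  have htn : t n = D := by
    rw [htEq, hD]
    unfold gp
    rw [hd.1, hd.2.1 (γ n) (γ 0)]
    ring
  have htlip : ∀ i j : ℕ, i ≤ n → j ≤ n → t i ≤ t j + (l2+e) * |(i:ℝ) - j| := by
    intro i j hi hj
    have h1 := gp_lipschitz₂ hd (γ 0) (γ i) (γ j) (γ n)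
    have h2 := hstep i j hi hj
    rw [htEq, htEq]
    linarith
  -- identities
  have hdz : ∀ l : ℕ, t l + gp d (γ l) (γ 0) (γ n) = d (γ l) (γ 0) := by
    intro l
    have s1 := hd.2.1 (γ 0) (γ l)
    have s2 := hd.2.1 (γ n) (γ l)
    have s3 := hd.2.1 (γ n) (γ 0)
    rw [htEq]
    unfold gp
    linarith
  have hdzy : ∀ l : ℕ, d (γ l) (γ n) = D - t l + gp d (γ l) (γ 0) (γ n) := by
    intro l
    have s1 := hd.2.1 (γ 0) (γ l)
    have s2 := hd.2.1 (γ n) (γ l)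
    have s3 := hd.2.1 (γ n) (γ 0)
    rw [htEq, hD]
    unfold gp
    linarith
  set m : ℕ := ⌈D⌉₊ with hm
  by_cases hm0 : m = 0
  · -- degenerate case : the two points coincide
    have hDz : D = 0 := le_antisymm (by
      have := (Nat.ceil_eq_zero (R := ℝ)).mp hm0
      linarith) hD0
    have hxy : γ 0 = γ n := hpoint _ _ (by rw [← hD]; exact hDz)
    refine ⟨0, fun _ => γ 0, rfl, hxy, ?_⟩
    intro i j hi hj
    have hi0 : i = 0 := Nat.le_zero.mp hi
    have hj0 : j = 0 := Nat.le_zero.mp hj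
    subst hi0; subst hj0
    rw [hd.1]
    norm_num
    linarith
  · -- main case
    have hm1 : 1 ≤ m := by omega
    have hmD : (m:ℝ) < D + 1 := Nat.ceil_lt_add_one hD0
    have hDm : D ≤ (m:ℝ) := Nat.le_ceil D
    have hex : ∀ k : ℕ, (k:ℝ) ≤ D → ∃ i, i ≤ n ∧ (k:ℝ) ≤ t i :=
      fun k hk => ⟨n, le_rfl, by rw [htn]; exact hk⟩
    have hchoice : ∀ k : ℕ, ∃ i : ℕ, i ≤ n ∧
        ((k:ℝ) ≤ D → ((k:ℝ) ≤ t i ∧ t i ≤ (k:ℝ) + (l2+e))) ∧ (k = 0 → i = 0) := by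
      intro k
      by_cases hk : (k:ℝ) ≤ D
      · have hspec := Nat.find_spec (hex k hk)
        refine ⟨Nat.find (hex k hk), hspec.1, fun _ => ⟨hspec.2, ?_⟩, fun hk0 => ?_⟩
        · by_cases hi0 : Nat.find (hex k hk) = 0
          · rw [hi0, ht0]
            have h1 : (k:ℝ) ≤ t 0 := hi0 ▸ hspec.2
            rw [ht0] at h1
            linarith
          · have hmin := Nat.find_min (hex k hk)
              (show Nat.find (hex k hk) - 1 < Nat.find (hex k hk) by omega)
            push_neg at hmin
            have h1 : t (Nat.find (hex k hk) - 1) < k := hmin (by omega : _ ≤ n)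
            have h2 := htlip (Nat.find (hex k hk)) (Nat.find (hex k hk) - 1) hspec.1 (by omega)
            rw [abs_sub_comm, cast_abs_sub_of_le (by omega : Nat.find (hex k hk) - 1 ≤ _)] at h2
            have hc : ((Nat.find (hex k hk) - 1 : ℕ):ℝ) = ((Nat.find (hex k hk) : ℕ):ℝ) - 1 := by
              have h3 : (1:ℕ) ≤ Nat.find (hex k hk) := by omega
              push_cast [Nat.cast_sub h3]
              ring
            rw [hc] at h2
            have h4 : (l2+e) * ((Nat.find (hex k hk) : ℝ) - ((Nat.find (hex k hk) : ℝ) - 1))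
                = l2 + e := by ring
            rw [h4] at h2
            linarith
        · subst hk0
          rw [Nat.find_eq_zero]
          refine ⟨Nat.zero_le n, ?_⟩
          rw [ht0]
          norm_num
      · refine ⟨n, le_rfl, fun h => absurd h hk, fun hk0 => ?_⟩
        exfalso
        apply hk
        rw [hk0]
        push_cast
        linarith
    choose idx hidxn hidxt hidx0 using hchoice
    have hkD : ∀ k : ℕ, k < m → (k:ℝ) ≤ D := by
      intro k hk
      have h : (k:ℝ) + 1 ≤ m := by exact_mod_cast hk
      linarith
    set w : ℕ → Y := fun k => if k < m then γ (idx k) else γ n with hw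
    clear_value w
    have hwEq : ∀ k, w k = if k < m then γ (idx k) else γ n := fun k => by rw [hw]
    refine ⟨m, w, ?_, ?_, ?_⟩
    · rw [hwEq 0, if_pos (by omega : 0 < m), hidx0 0 rfl]
    · rw [hwEq m, if_neg (lt_irrefl m)]
    · have key : ∀ i j : ℕ, i ≤ j → j ≤ m →
          |(i:ℝ) - j| - α ≤ d (w i) (w j) ∧ d (w i) (w j) ≤ |(i:ℝ) - j| + α := by
        intro i j hij hjm
        by_cases hjm' : j < m
        · have him : i < m := by omega
          obtain ⟨hti1, hti2⟩ := hidxt i (hkD i him)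
          obtain ⟨htj1, htj2⟩ := hidxt j (hkD j hjm')
          have hPi := hmorse (idx i) (hidxn i)
          have hPj := hmorse (idx j) (hidxn j)
          have hPi0 := gp_nonneg hd (γ (idx i)) (γ 0) (γ n)
          have hPj0 := gp_nonneg hd (γ (idx j)) (γ 0) (γ n)
          have habs : |(i:ℝ) - j| = (j:ℝ) - i := cast_abs_sub_of_le hij
          have hcast : (i:ℝ) ≤ j := by exact_mod_cast hij
          constructor
          · have hl := gp_lipschitz₂ hd (γ 0) (γ (idx j)) (γ (idx i)) (γ n)
            have hsym := hd.2.1 (γ (idx j)) (γ (idx i))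
            rw [← htEq, ← htEq] at hl
            rw [hwEq i, hwEq j, if_pos him, if_pos hjm', habs]
            rw [hα]
            linarith
          · have hmin := hhyp (γ (idx i)) (γ n) (γ (idx j)) (γ 0)
            rw [gp_symm hd (γ 0) (γ n) (γ (idx j))] at hmin
            rw [← htEq, ← htEq] at hmin
            have hidq : d (γ (idx i)) (γ (idx j)) =
                d (γ (idx i)) (γ 0) + d (γ (idx j)) (γ 0)
                  - 2*gp d (γ 0) (γ (idx i)) (γ (idx j)) := by
              unfold gp; ring
            have hdi := hdz (idx i)
            have hdj := hdz (idx j)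
            rw [hwEq i, hwEq j, if_pos him, if_pos hjm', habs, hα]
            rcases le_total (t (idx i)) (t (idx j)) with hc | hc
            · rw [min_eq_left hc] at hmin
              linarith
            · rw [min_eq_right hc] at hmin
              linarith
        · have hjeq : j = m := by omega
          subst hjeq
          by_cases him : i < m
          · obtain ⟨hti1, hti2⟩ := hidxt i (hkD i him)
            have hPi := hmorse (idx i) (hidxn i)
            have hPi0 := gp_nonneg hd (γ (idx i)) (γ 0) (γ n)
            have hdy := hdzy (idx i)
            have habs : |(i:ℝ) - m| = (m:ℝ) - i := cast_abs_sub_of_le (by omega)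
            have hcast : (i:ℝ) ≤ m := by exact_mod_cast (by omega : i ≤ m)
            rw [hwEq i, hwEq m, if_pos him, if_neg (lt_irrefl m), habs, hα]
            constructor
            · linarith
            · linarith
          · have hieq : i = m := by omega
            subst hieq
            rw [hwEq m, if_neg (lt_irrefl m), hd.1]
            have h0 : |(m:ℝ) - m| = 0 := by rw [sub_self, abs_zero]
            rw [h0]
            constructor <;> linarith
      intro i j hi hj
      rcases le_total i j with h | h
      · exact key i j h hj
      · obtain ⟨k1, k2⟩ := key j i h hi
        have hsym : d (w i) (w j) = d (w j) (w i) := hd.2.1 _ _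
        have habs : |(i:ℝ) - j| = |(j:ℝ) - i| := abs_sub_comm _ _
        rw [hsym, habs]
        exact ⟨k1, k2⟩

end
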